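/- The lead term of tr_B^G(N·e) in the graded reverse lexicographic order with a0 < a1 < a2 < a3 is 2 a3^p a1^3, and the lead term of tr_B^G(N · tr^P(a3^{p−2})) is (2/3) a3^p a2^{p−3} a1. -/

import Mathlib

open MvPolynomial

noncomputable section

/-- The right action of the 2×2 matrix `g` over `F_p` on `F[V] = F[a₃,a₂,a₁,a₀]`
(with `aᵢ = X i`), given by the dual of the third symmetric power representation. -/
def act (p : ℕ) [Fact p.Prime] (F : Type) [Field F] [CharP F p]
    (g : Matrix (Fin 2) (Fin 2) (ZMod p)) :
    MvPolynomial (Fin 4) F →ₐ[F] MvPolynomial (Fin 4) F :=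
  letI c : ZMod p → MvPolynomial (Fin 4) F := fun x => C (ZMod.castHom (dvd_refl p) F x)
  letI al := c (g 0 0)
  letI be := c (g 0 1)
  letI ga := c (g 1 0)
  letI de := c (g 1 1)
  aeval ![
    de ^ 3 * X 0 + 3 * de ^ 2 * ga * X 1 + 3 * de * ga ^ 2 * X 2 + ga ^ 3 * X 3,
    de ^ 2 * be * X 0 + (de ^ 2 * al + 2 * de * be * ga) * X 1
      + (2 * de * ga * al + be * ga ^ 2) * X 2 + ga ^ 2 * al * X 3,
    de * be ^ 2 * X 0 + (2 * de * be * al + be ^ 2 * ga) * X 1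
      + (de * al ^ 2 + 2 * be * ga * al) * X 2 + ga * al ^ 2 * X 3,
    be ^ 3 * X 0 + 3 * be ^ 2 * al * X 1 + 3 * be * al ^ 2 * X 2 + al ^ 3 * X 3]

/-- The transfer with respect to the Sylow `p`-subgroup `P = ⟨σ⟩`,
`tr^P(f) = ∑_{τ ∈ P} (f)τ`, where the elements of `P` are the matrices `[[1,s],[0,1]]`. -/
def trP (p : ℕ) [Fact p.Prime] (F : Type) [Field F] [CharP F p]
    (f : MvPolynomial (Fin 4) F) : MvPolynomial (Fin 4) F :=
  ∑ s : ZMod p, act p F !![1, s; 0, 1] f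

/-- The relative transfer `tr_B^G(f) = ∑_{τ ∈ Q ∪ {η}} (f)τ`, using the coset
representatives `Q ∪ {η}` of the Borel subgroup `B` in `G = SL₂(F_p)`. -/
def trBG (p : ℕ) [Fact p.Prime] (F : Type) [Field F] [CharP F p]
    (f : MvPolynomial (Fin 4) F) : MvPolynomial (Fin 4) F :=
  (∑ s : ZMod p, act p F !![1, 0; s, 1] f) + act p F !![0, 1; -1, 0] f

/-- The full transfer `tr^G(f) = ∑_{τ ∈ SL₂(F_p)} (f)τ`. -/
def trG (p : ℕ) [Fact p.Prime] (F : Type) [Field F] [CharP F p]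
    (f : MvPolynomial (Fin 4) F) : MvPolynomial (Fin 4) F :=
  ∑ g : Matrix.SpecialLinearGroup (Fin 2) (ZMod p), act p F g.1 f

/-- `N = ∏_{τ ∈ P} (a₃)τ = ∏_{s ∈ F_p} (a₃ + 3s a₂ + 3s² a₁ + s³ a₀)`. -/
def Npoly (p : ℕ) [Fact p.Prime] (F : Type) [Field F] [CharP F p] :
    MvPolynomial (Fin 4) F :=
  ∏ s : ZMod p, act p F !![1, s; 0, 1] (X 3)

/-- The weight of the monomial `a₃^e₃ a₂^e₂ a₁^e₁ a₀^e₀`, i.e. `3e₃ + e₂ - e₁ - 3e₀`. -/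
def wt (d : Fin 4 →₀ ℕ) : ℤ :=
  3 * (d 3 : ℤ) + (d 2 : ℤ) - (d 1 : ℤ) - 3 * (d 0 : ℤ)

/-- `f` is isobaric of weight `lam` modulo `p - 1`: every monomial occurring in `f`
has weight congruent to `lam` modulo `p - 1`. -/
def Isobaric (p : ℕ) {F : Type} [Field F] (f : MvPolynomial (Fin 4) F) (lam : ℤ) : Prop :=
  ∀ d ∈ f.support, ((p : ℤ) - 1) ∣ (wt d - lam)

/-- Strict grevlex comparison on exponent vectors, for the graded reverse
lexicographic order with `a₀ < a₁ < a₂ < a₃`. -/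
def grevlexLt (d e : Fin 4 →₀ ℕ) : Prop :=
  (∑ i : Fin 4, d i) < (∑ i : Fin 4, e i) ∨
    ((∑ i : Fin 4, d i) = (∑ i : Fin 4, e i) ∧
      ∃ k : Fin 4, e k < d k ∧ ∀ j : Fin 4, j < k → d j = e j)

/-- `d` is the lead monomial of `f` in the grevlex order with `a₀ < a₁ < a₂ < a₃`. -/
def LeadMonomialIs {F : Type} [Field F] (f : MvPolynomial (Fin 4) F) (d : Fin 4 →₀ ℕ) : Prop :=
  coeff d f ≠ 0 ∧ ∀ e ∈ f.support, e ≠ d → grevlexLt e d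

/-- The lead term of `f` is `c · x^d` in the grevlex order with `a₀ < a₁ < a₂ < a₃`. -/
def LeadTermIs {F : Type} [Field F] (f : MvPolynomial (Fin 4) F) (c : F) (d : Fin 4 →₀ ℕ) :
    Prop :=
  LeadMonomialIs f d ∧ coeff d f = c

/-- The discriminant `D` of the binary cubic. -/
def Dpoly (F : Type) [Field F] : MvPolynomial (Fin 4) F :=
  3 * X 2 ^ 2 * X 1 ^ 2 - 4 * X 3 * X 1 ^ 3 - 4 * X 2 ^ 3 * X 0
    + 6 * X 3 * X 2 * X 1 * X 0 - X 3 ^ 2 * X 0 ^ 2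

/-- `K = -tr^G(a₁^{p-1})`. -/
def Kpoly (p : ℕ) [Fact p.Prime] (F : Type) [Field F] [CharP F p] :
    MvPolynomial (Fin 4) F :=
  - trG p F (X 1 ^ (p - 1))

/-- Dickson's invariant `L = 3(a₂^p a₁ - a₂ a₁^p) - (a₃^p a₀ - a₃ a₀^p)`. -/
def Lpoly (p : ℕ) (F : Type) [Field F] : MvPolynomial (Fin 4) F :=
  3 * (X 2 ^ p * X 1 - X 2 * X 1 ^ p) - (X 3 ^ p * X 0 - X 3 * X 0 ^ p)

/-- `e = 2a₁³ + a₀(a₃a₀ - 3a₂a₁)`. -/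
def epoly (F : Type) [Field F] : MvPolynomial (Fin 4) F :=
  2 * X 1 ^ 3 + X 0 * (X 3 * X 0 - 3 * X 2 * X 1)

/-- `d = a₁² - a₂a₀`. -/
def dpoly (F : Type) [Field F] : MvPolynomial (Fin 4) F :=
  X 1 ^ 2 - X 2 * X 0

/-- `ξ = 3a₂² - 4a₃a₁`. -/
def xipoly (F : Type) [Field F] : MvPolynomial (Fin 4) F :=
  3 * X 2 ^ 2 - 4 * X 3 * X 1

/-- The ring of `SL₂(F_p)`-invariants `F[V]^{SL₂(F_p)}`, as a subalgebra of `F[V]`. -/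
def invariants (p : ℕ) [Fact p.Prime] (F : Type) [Field F] [CharP F p] :
    Subalgebra F (MvPolynomial (Fin 4) F) where
  carrier := {f | ∀ g : Matrix.SpecialLinearGroup (Fin 2) (ZMod p), act p F g.1 f = f}
  mul_mem' := fun hf hg g => by rw [map_mul, hf g, hg g]
  one_mem' := fun g => map_one _
  add_mem' := fun hf hg g => by rw [map_add, hf g, hg g]
  zero_mem' := fun g => map_zero _
  algebraMap_mem' := fun c g => (act _ _ _).commutes c

section AuxLemmas

variable (p : ℕ) [Fact p.Prime] (F : Type) [Field F] [CharP F p]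

/-- cast `ZMod p → F` -/
def κQ : ZMod p →+* F := ZMod.castHom (dvd_refl p) F

variable {p F}

lemma act_X0 (g : Matrix (Fin 2) (Fin 2) (ZMod p)) :
    act p F g (X 0) = C (κQ p F (g 1 1) ^ 3) * X 0
      + C (3 * κQ p F (g 1 1) ^ 2 * κQ p F (g 1 0)) * X 1
      + C (3 * κQ p F (g 1 1) * κQ p F (g 1 0) ^ 2) * X 2
      + C (κQ p F (g 1 0) ^ 3) * X 3 := by
  simp only [act, aeval_X, Matrix.cons_val_zero, map_mul, map_pow, map_ofNat, κQ]
  try ring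

lemma act_X1 (g : Matrix (Fin 2) (Fin 2) (ZMod p)) :
    act p F g (X 1) = C (κQ p F (g 1 1) ^ 2 * κQ p F (g 0 1)) * X 0
      + C (κQ p F (g 1 1) ^ 2 * κQ p F (g 0 0) + 2 * κQ p F (g 1 1) * κQ p F (g 0 1) * κQ p F (g 1 0)) * X 1
      + C (2 * κQ p F (g 1 1) * κQ p F (g 1 0) * κQ p F (g 0 0) + κQ p F (g 0 1) * κQ p F (g 1 0) ^ 2) * X 2
      + C (κQ p F (g 1 0) ^ 2 * κQ p F (g 0 0)) * X 3 := by
  simp only [act, aeval_X, Matrix.cons_val_one, Matrix.head_cons, Matrix.cons_val_zero,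
    map_mul, map_pow, map_add, map_ofNat, κQ]
  try ring

lemma act_X2 (g : Matrix (Fin 2) (Fin 2) (ZMod p)) :
    act p F g (X 2) = C (κQ p F (g 1 1) * κQ p F (g 0 1) ^ 2) * X 0
      + C (2 * κQ p F (g 1 1) * κQ p F (g 0 1) * κQ p F (g 0 0) + κQ p F (g 0 1) ^ 2 * κQ p F (g 1 0)) * X 1
      + C (κQ p F (g 1 1) * κQ p F (g 0 0) ^ 2 + 2 * κQ p F (g 0 1) * κQ p F (g 1 0) * κQ p F (g 0 0)) * X 2
      + C (κQ p F (g 1 0) * κQ p F (g 0 0) ^ 2) * X 3 := by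
  simp only [act, aeval_X, map_mul, map_pow, map_add, map_ofNat, κQ]
  norm_num [Matrix.cons_val_one, Matrix.head_cons, Matrix.cons_val_zero, Matrix.cons_val]
  try ring
  rfl

lemma act_X3 (g : Matrix (Fin 2) (Fin 2) (ZMod p)) :
    act p F g (X 3) = C (κQ p F (g 0 1) ^ 3) * X 0
      + C (3 * κQ p F (g 0 1) ^ 2 * κQ p F (g 0 0)) * X 1
      + C (3 * κQ p F (g 0 1) * κQ p F (g 0 0) ^ 2) * X 2
      + C (κQ p F (g 0 0) ^ 3) * X 3 := by
  simp only [act, aeval_X, map_mul, map_pow, map_add, map_ofNat, κQ]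
  norm_num [Matrix.cons_val_one, Matrix.head_cons, Matrix.cons_val_zero, Matrix.cons_val]
  try ring
  rfl


lemma act_eq_aeval (g : Matrix (Fin 2) (Fin 2) (ZMod p)) :
    act p F g = aeval (fun i => act p F g (X i)) := by
  apply algHom_ext
  intro i
  rw [aeval_X]

lemma act_homog {g : Matrix (Fin 2) (Fin 2) (ZMod p)} {f : MvPolynomial (Fin 4) F} {n : ℕ}
    (hf : f.IsHomogeneous n) : (act p F g f).IsHomogeneous n := by
  rw [act_eq_aeval]
  have h1 : ∀ i : Fin 4, (act p F g (X i)).IsHomogeneous 1 := by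
    intro i
    have hsum : ∀ c0 c1 c2 c3 : F, (C c0 * X 0 + C c1 * X 1 + C c2 * X 2 + C c3 * X 3 :
        MvPolynomial (Fin 4) F).IsHomogeneous 1 := fun c0 c1 c2 c3 =>
      (((isHomogeneous_C_mul_X _ _).add (isHomogeneous_C_mul_X _ _)).add
        (isHomogeneous_C_mul_X _ _)).add (isHomogeneous_C_mul_X _ _)
    fin_cases i
    · show ((act p F g) (X 0)).IsHomogeneous 1
      rw [act_X0]; exact hsum _ _ _ _
    · show ((act p F g) (X 1)).IsHomogeneous 1
      rw [act_X1]; exact hsum _ _ _ _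
    · show ((act p F g) (X 2)).IsHomogeneous 1
      rw [act_X2]; exact hsum _ _ _ _
    · show ((act p F g) (X 3)).IsHomogeneous 1
      rw [act_X3]; exact hsum _ _ _ _
  simpa using hf.aeval _ h1

lemma act_id (f : MvPolynomial (Fin 4) F) : act p F !![1, 0; 0, 1] f = f := by
  rw [act_eq_aeval]
  have h1 : (fun i => act p F !![(1 : ZMod p), 0; 0, 1] (X i)) = (X : Fin 4 → MvPolynomial (Fin 4) F) := by
    funext i
    fin_cases i
    · show act p F !![(1 : ZMod p), 0; 0, 1] (X 0) = X 0
      rw [act_X0]; simp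
    · show act p F !![(1 : ZMod p), 0; 0, 1] (X 1) = X 1
      rw [act_X1]; simp
    · show act p F !![(1 : ZMod p), 0; 0, 1] (X 2) = X 2
      rw [act_X2]; simp
    · show act p F !![(1 : ZMod p), 0; 0, 1] (X 3) = X 3
      rw [act_X3]; simp
  rw [h1, aeval_X_left_apply]

/-- the substitution killing the variables in `S` -/
def kill (p : ℕ) [Fact p.Prime] (F : Type) [Field F] [CharP F p] (S : Finset (Fin 4)) :
    MvPolynomial (Fin 4) F →ₐ[F] MvPolynomial (Fin 4) F :=
  aeval (fun i => if i ∈ S then 0 else X i)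

lemma kill_X_mem {S : Finset (Fin 4)} {i : Fin 4} (h : i ∈ S) : kill p F S (X i) = 0 := by
  simp [kill, h]

lemma kill_X_not_mem {S : Finset (Fin 4)} {i : Fin 4} (h : i ∉ S) : kill p F S (X i) = X i := by
  simp [kill, h]

lemma coeff_kill (S : Finset (Fin 4)) (f : MvPolynomial (Fin 4) F) (e : Fin 4 →₀ ℕ) :
    coeff e (kill p F S f) = if ∀ i ∈ S, e i = 0 then coeff e f else 0 := by
  have hmono : ∀ (m : Fin 4 →₀ ℕ) (a : F), kill p F S (monomial m a)
      = if ∀ i ∈ S, m i = 0 then monomial m a else 0 := by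
    intro m a
    rw [kill, aeval_monomial, Finsupp.prod_fintype _ _ (fun i => pow_zero _)]
    by_cases hm : ∀ i ∈ S, m i = 0
    · rw [if_pos hm]
      have : ∀ i : Fin 4, ((if i ∈ S then 0 else X i) : MvPolynomial (Fin 4) F) ^ m i
          = X i ^ m i := by
        intro i
        by_cases hi : i ∈ S
        · rw [if_pos hi, hm i hi, pow_zero, pow_zero]
        · rw [if_neg hi]
      rw [Finset.prod_congr rfl (fun i _ => this i)]
      rw [monomial_eq, Finsupp.prod_fintype _ _ (fun i => pow_zero _), algebraMap_eq]
    · rw [if_neg hm]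
      push_neg at hm
      obtain ⟨i0, hi0, hmi0⟩ := hm
      rw [Finset.prod_eq_zero (Finset.mem_univ i0), mul_zero]
      rw [if_pos hi0]
      exact zero_pow hmi0
  conv_lhs => rw [f.as_sum, map_sum]
  rw [coeff_sum]
  by_cases he : ∀ i ∈ S, e i = 0
  · rw [if_pos he]
    rw [Finset.sum_eq_single e]
    · rw [hmono]
      by_cases hes : e ∈ f.support
      · rw [if_pos he, coeff_monomial, if_pos rfl]
      · rw [notMem_support_iff] at hes
        rw [hes]
        simp
    · intro m _ hme
      rw [hmono]
      by_cases hm : ∀ i ∈ S, m i = 0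
      · rw [if_pos hm, coeff_monomial, if_neg hme]
      · rw [if_neg hm, coeff_zero]
    · intro hns
      rw [notMem_support_iff] at hns
      rw [hmono]
      by_cases hm : ∀ i ∈ S, e i = 0
      · rw [if_pos hm, hns]; simp
      · rw [if_neg hm, coeff_zero]
  · rw [if_neg he]
    apply Finset.sum_eq_zero
    intro m _
    rw [hmono]
    by_cases hm : ∀ i ∈ S, m i = 0
    · rw [if_pos hm, coeff_monomial]
      by_cases hme : m = e
      · subst hme; exact absurd hm he
      · rw [if_neg hme]
    · rw [if_neg hm, coeff_zero]


lemma act_C (g : Matrix (Fin 2) (Fin 2) (ZMod p)) (a : F) : act p F g (C a) = C a := by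
  rw [show (C a : MvPolynomial (Fin 4) F) = algebraMap F _ a from rfl]
  exact (act p F g).commutes a

lemma act_upper_X3 (s : ZMod p) : act p F !![1, s; 0, 1] (X 3)
    = C (κQ p F s ^ 3) * X 0 + C (3 * κQ p F s ^ 2) * X 1 + C (3 * κQ p F s) * X 2 + X 3 := by
  rw [act_X3]
  simp [Matrix.cons_val_one, Matrix.head_cons, Matrix.cons_val_zero]

lemma act_lower_X0 (t : ZMod p) : act p F !![1, 0; t, 1] (X 0)
    = X 0 + C (3 * κQ p F t) * X 1 + C (3 * κQ p F t ^ 2) * X 2 + C (κQ p F t ^ 3) * X 3 := by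
  rw [act_X0]
  simp [Matrix.cons_val_one, Matrix.head_cons, Matrix.cons_val_zero]

lemma act_lower_X1 (t : ZMod p) : act p F !![1, 0; t, 1] (X 1)
    = X 1 + C (2 * κQ p F t) * X 2 + C (κQ p F t ^ 2) * X 3 := by
  rw [act_X1]
  simp [Matrix.cons_val_one, Matrix.head_cons, Matrix.cons_val_zero]

lemma act_lower_X2 (t : ZMod p) : act p F !![1, 0; t, 1] (X 2)
    = X 2 + C (κQ p F t) * X 3 := by
  rw [act_X2]
  simp [Matrix.cons_val_one, Matrix.head_cons, Matrix.cons_val_zero]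

lemma act_lower_X3 (t : ZMod p) : act p F !![1, 0; t, 1] (X 3) = X 3 := by
  rw [act_X3]
  simp [Matrix.cons_val_one, Matrix.head_cons, Matrix.cons_val_zero]

lemma act_eta_X0 : act p F !![0, 1; -1, 0] (X 0) = - X 3 := by
  rw [act_X0]
  simp [Matrix.cons_val_one, Matrix.head_cons, Matrix.cons_val_zero]
  ring

lemma act_eta_X1 : act p F !![0, 1; -1, 0] (X 1) = X 2 := by
  rw [act_X1]
  simp [Matrix.cons_val_one, Matrix.head_cons, Matrix.cons_val_zero]

lemma act_eta_X2 : act p F !![0, 1; -1, 0] (X 2) = - X 1 := by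
  rw [act_X2]
  simp [Matrix.cons_val_one, Matrix.head_cons, Matrix.cons_val_zero]

lemma act_eta_X3 : act p F !![0, 1; -1, 0] (X 3) = X 0 := by
  rw [act_X3]
  simp [Matrix.cons_val_one, Matrix.head_cons, Matrix.cons_val_zero]


lemma kill_C (S : Finset (Fin 4)) (a : F) : kill p F S (C a) = C a := by
  rw [show (C a : MvPolynomial (Fin 4) F) = algebraMap F _ a from rfl]
  exact (kill p F S).commutes a

lemma kill0_X0 : kill p F {0} (X 0) = 0 := kill_X_mem (by simp)

lemma kill0_X1 : kill p F {0} (X 1) = X 1 := kill_X_not_mem (by simp)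

lemma kill0_X2 : kill p F {0} (X 2) = X 2 := kill_X_not_mem (by simp)

lemma kill0_X3 : kill p F {0} (X 3) = X 3 := kill_X_not_mem (by simp)

lemma psi_act_lower_N {t : ZMod p} (ht : t ≠ 0) :
    kill p F {0} (act p F !![1, 0; t, 1] (Npoly p F)) = 0 := by
  rw [Npoly, map_prod, map_prod]
  apply Finset.prod_eq_zero (Finset.mem_univ (-t⁻¹))
  rw [act_upper_X3]
  simp only [map_add, map_mul, act_C, act_lower_X0, act_lower_X1, act_lower_X2,
    act_lower_X3, kill_C, kill0_X0, kill0_X1, kill0_X2, kill0_X3]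
  have hC : (1 : MvPolynomial (Fin 4) F) + C (κQ p F (-t⁻¹)) * C (κQ p F t) = 0 := by
    rw [← map_mul, ← map_mul, show (-t⁻¹) * t = -1 by rw [neg_mul, inv_mul_cancel₀ ht]]
    simp
  set u := κQ p F t
  set v := κQ p F (-t⁻¹)
  simp only [map_mul, map_pow, map_ofNat]
  linear_combination ((1 + C v * C u) ^ 2 * (X 3 : MvPolynomial (Fin 4) F)
    + 3 * C v * (1 + C v * C u) * X 2 + 3 * C v ^ 2 * X 1) * hC

lemma psi_act_eta_N :
    kill p F {0} (act p F !![0, 1; -1, 0] (Npoly p F)) = 0 := by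
  rw [Npoly, map_prod, map_prod]
  apply Finset.prod_eq_zero (Finset.mem_univ 0)
  rw [show (!![1, (0 : ZMod p); 0, 1]) = !![1, 0; 0, 1] from rfl, act_id, act_eta_X3, kill0_X0]

lemma psi_trBG (f : MvPolynomial (Fin 4) F) :
    kill p F {0} (trBG p F (Npoly p F * f))
      = kill p F {0} (Npoly p F) * kill p F {0} f := by
  rw [trBG, map_add, map_sum]
  rw [Finset.sum_eq_single_of_mem (0 : ZMod p) (Finset.mem_univ 0)
    (fun s _ hs => by rw [map_mul, map_mul, psi_act_lower_N hs, zero_mul])]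
  rw [show (!![1, 0; (0 : ZMod p), 1]) = !![1, 0; 0, 1] from rfl, act_id, map_mul]
  rw [map_mul (act p F !![0, 1; -1, 0]), map_mul, psi_act_eta_N, zero_mul, add_zero]

lemma two_X1_cubed : (2 : MvPolynomial (Fin 4) F) * X 1 ^ 3 = monomial (Finsupp.single 1 3) 2 := by
  rw [X_pow_eq_monomial, show (2 : MvPolynomial (Fin 4) F) = C 2 from (map_ofNat C 2).symm,
    C_mul_monomial, mul_one]

lemma psi_epoly : kill p F {0} (epoly F) = monomial (Finsupp.single 1 3) 2 := by
  simp only [epoly, map_add, map_mul, map_pow, map_ofNat, kill0_X0, kill0_X1, zero_mul, add_zero]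
  rw [two_X1_cubed]

lemma N_homog : (Npoly p F).IsHomogeneous p := by
  have h := MvPolynomial.IsHomogeneous.prod Finset.univ
    (fun s : ZMod p => act p F !![1, s; 0, 1] (X 3)) (fun _ => 1)
    (fun s _ => act_homog (isHomogeneous_X F 3))
  simpa [Npoly, Finset.sum_const, ZMod.card] using h

lemma kill_homog {S : Finset (Fin 4)} {f : MvPolynomial (Fin 4) F} {n : ℕ}
    (hf : f.IsHomogeneous n) : (kill p F S f).IsHomogeneous n := by
  intro d hd
  rw [coeff_kill] at hd
  by_cases hc : ∀ i ∈ S, d i = 0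
  · rw [if_pos hc] at hd; exact hf hd
  · rw [if_neg hc] at hd; exact absurd rfl hd

lemma homog_sum4 {f : MvPolynomial (Fin 4) F} {n : ℕ} (hf : f.IsHomogeneous n)
    {e : Fin 4 →₀ ℕ} (he : coeff e f ≠ 0) : ∑ i : Fin 4, e i = n := by
  have h := hf he
  rw [← h, show (Finsupp.weight 1 : (Fin 4 →₀ ℕ) →+ ℕ) = Finsupp.weight (fun _ => 1) from rfl,
    ← Finsupp.degree_eq_weight_one, Finsupp.degree_apply]
  exact (Finset.sum_subset (Finset.subset_univ _)
    (fun i _ hi => by simpa using Finsupp.notMem_support_iff.mp hi)).symm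

lemma coeff_X3p_N : coeff (Finsupp.single 3 p) (Npoly p F) = 1 := by
  have h := coeff_kill (p := p) (F := F) ({0, 1, 2} : Finset (Fin 4)) (Npoly p F) (Finsupp.single 3 p)
  rw [if_pos (by intro i hi; fin_cases hi <;> simp [Finsupp.single_apply])] at h
  rw [← h]
  have hN : kill p F {0, 1, 2} (Npoly p F) = X 3 ^ p := by
    rw [Npoly, map_prod]
    have hfac : ∀ s : ZMod p, kill p F {0, 1, 2} (act p F !![1, s; 0, 1] (X 3)) = X 3 := by
      intro s
      rw [act_upper_X3]
      simp only [map_add, map_mul, kill_C]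
      rw [kill_X_mem (by simp), kill_X_mem (by simp), kill_X_mem (by simp),
        kill_X_not_mem (by simp)]
      ring
    rw [Finset.prod_congr rfl (fun s _ => hfac s), Finset.prod_const, Finset.card_univ, ZMod.card]
  rw [hN, coeff_X_pow, if_pos rfl]

/-- sum of `m`-th powers of the elements of the prime field, cast into `F` -/
def SSum (p : ℕ) [Fact p.Prime] (F : Type) [Field F] [CharP F p] (m : ℕ) : F :=
  ∑ s : ZMod p, κQ p F s ^ m

lemma zmod_sum_pow {m : ℕ} (hm : m < 2 * (p - 1)) :
    (∑ s : ZMod p, s ^ m) = if m = p - 1 then (-1 : ZMod p) else 0 := by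
  have hp2 : 2 ≤ p := (Fact.out : p.Prime).two_le
  have hlow : ∀ k : ℕ, k < p - 1 → (∑ s : ZMod p, s ^ k) = 0 := by
    intro k hk
    have := FiniteField.sum_pow_lt_card_sub_one (ZMod p) k (by rwa [ZMod.card])
    exact this
  rcases lt_trichotomy m (p - 1) with h | h | h
  · rw [if_neg (by omega), hlow m h]
  · rw [if_pos h, h]
    rw [← Finset.sum_erase_add _ _ (Finset.mem_univ (0 : ZMod p)),
      zero_pow (by omega : p - 1 ≠ 0), add_zero]
    rw [Finset.sum_congr rfl
      (fun x hx => ZMod.pow_card_sub_one_eq_one (Finset.ne_of_mem_erase hx))]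
    rw [Finset.sum_const, Finset.card_erase_of_mem (Finset.mem_univ 0), Finset.card_univ,
      ZMod.card, nsmul_eq_mul, mul_one, Nat.cast_sub (by omega), Nat.cast_one,
      ZMod.natCast_self, zero_sub]
  · rw [if_neg (by omega)]
    have h1 : ∀ s : ZMod p, s ^ m = s ^ (m - (p - 1)) := by
      intro s
      by_cases hs : s = 0
      · subst hs
        rw [zero_pow (by omega), zero_pow (by omega)]
      · conv_lhs => rw [show m = (p - 1) + (m - (p - 1)) by omega, pow_add,
          ZMod.pow_card_sub_one_eq_one hs, one_mul]
    rw [Finset.sum_congr rfl (fun s _ => h1 s)]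
    exact hlow _ (by omega)

lemma SSum_eq {m : ℕ} (hm : m < 2 * (p - 1)) :
    SSum p F m = if m = p - 1 then (-1 : F) else 0 := by
  have : SSum p F m = κQ p F (∑ s : ZMod p, s ^ m) := by
    rw [map_sum]
    exact Finset.sum_congr rfl (fun s _ => (map_pow _ _ _).symm)
  rw [this, zmod_sum_pow hm]
  split
  · simp
  · simp

lemma mono_eq (a : F) (x y z : Fin 4) (i j k : ℕ) :
    monomial (Finsupp.single x i + Finsupp.single y j + Finsupp.single z k) a
      = C a * X x ^ i * X y ^ j * X z ^ k := by
  rw [X_pow_eq_monomial, X_pow_eq_monomial, X_pow_eq_monomial, C_apply, monomial_mul,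
    monomial_mul, monomial_mul]
  simp

/-- the image of `a₃` under `σ_s` followed by killing `a₀` -/
def lin3 (p : ℕ) [Fact p.Prime] (F : Type) [Field F] [CharP F p] (s : ZMod p) :
    MvPolynomial (Fin 4) F :=
  X 3 + (C (3 * κQ p F s) * X 2 + C (3 * κQ p F s ^ 2) * X 1)

lemma psi_trP_eq :
    kill p F {0} (trP p F (X 3 ^ (p - 2)))
      = ∑ s : ZMod p, (lin3 p F s) ^ (p - 2) := by
  rw [trP, map_sum]
  apply Finset.sum_congr rfl
  intro s _
  rw [map_pow, map_pow, act_upper_X3]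
  simp only [map_add, map_mul, kill_C, kill0_X0, kill0_X1, kill0_X2, kill0_X3, lin3]
  congr 1
  ring

lemma W_eq :
    kill p F {0} (trP p F (X 3 ^ (p - 2)))
      = ∑ i ∈ Finset.range (p - 1), ∑ j ∈ Finset.range (p - 1 - i),
          monomial (Finsupp.single 3 i + Finsupp.single 2 j
              + Finsupp.single 1 (p - 2 - i - j))
            ((((p - 2).choose i : F) * (((p - 2 - i).choose j : F)) * 3 ^ (p - 2 - i))
              * SSum p F (2 * (p - 2 - i) - j)) := by
  have hp2 : 2 ≤ p := (Fact.out : p.Prime).two_le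
  rw [psi_trP_eq]
  have h1 : ∀ s : ZMod p,
      (lin3 p F s) ^ (p - 2)
        = ∑ i ∈ Finset.range (p - 1), ∑ j ∈ Finset.range (p - 1 - i),
            monomial (Finsupp.single 3 i + Finsupp.single 2 j
                + Finsupp.single 1 (p - 2 - i - j))
              ((((p - 2).choose i : F) * (((p - 2 - i).choose j : F)) * 3 ^ (p - 2 - i))
                * κQ p F s ^ (2 * (p - 2 - i) - j)) := by
    intro s
    rw [lin3, add_pow, show p - 2 + 1 = p - 1 by omega]
    apply Finset.sum_congr rfl
    intro i hi
    have hi' : i ≤ p - 2 := by have := Finset.mem_range.mp hi; omega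
    rw [add_pow, show p - 2 - i + 1 = p - 1 - i by omega, Finset.mul_sum, Finset.sum_mul]
    apply Finset.sum_congr rfl
    intro j hj
    have hj' : j ≤ p - 2 - i := by have := Finset.mem_range.mp hj; omega
    rw [show 2 * (p - 2 - i) - j = j + 2 * (p - 2 - i - j) by omega, pow_add, pow_mul]
    rw [mono_eq]
    simp only [map_mul, map_pow, map_ofNat, map_natCast]
    set a := p - 2 - i - j with ha
    rw [show p - 2 - i = j + a by omega, pow_add]
    ring
  refine Eq.trans (Finset.sum_congr rfl (fun s _ => h1 s)) ?_
  rw [Finset.sum_comm]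
  refine Finset.sum_congr rfl (fun i _ => ?_)
  rw [Finset.sum_comm]
  refine Finset.sum_congr rfl (fun j _ => ?_)
  rw [← map_sum, ← Finset.mul_sum]
  rfl

lemma W_supp (hp3 : 3 < p) {v : Fin 4 →₀ ℕ}
    (hv : v ∈ (kill p F {0} (trP p F (X 3 ^ (p - 2)))).support) :
    v 0 = 0 ∧ 1 ≤ v 1 ∧ (v 1 = 1 → v 3 = 0) ∧ v 1 + v 2 + v 3 = p - 2 := by
  classical
  rw [W_eq] at hv
  obtain ⟨i, hi, hv⟩ := Finset.mem_biUnion.mp (MvPolynomial.support_sum hv)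
  obtain ⟨j, hj, hv⟩ := Finset.mem_biUnion.mp (MvPolynomial.support_sum hv)
  rw [Finset.mem_range] at hi hj
  rw [MvPolynomial.support_monomial] at hv
  by_cases hK : (((p - 2).choose i : F) * (((p - 2 - i).choose j : F)) * 3 ^ (p - 2 - i))
      * SSum p F (2 * (p - 2 - i) - j) = 0
  · rw [if_pos hK] at hv
    exact absurd hv (Finset.notMem_empty v)
  · rw [if_neg hK] at hv
    have hSne : SSum p F (2 * (p - 2 - i) - j) ≠ 0 := fun h => hK (by rw [h, mul_zero])
    have hS : 2 * (p - 2 - i) - j = p - 1 := by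
      by_contra hne
      rw [SSum_eq (by omega), if_neg hne] at hSne
      exact hSne rfl
    rw [Finset.mem_singleton] at hv
    subst hv
    simp +decide [Finsupp.add_apply, Finsupp.single_apply]
    omega

lemma W_coeff (hp3 : 3 < p) :
    coeff (Finsupp.single 2 (p - 3) + Finsupp.single 1 1)
      (kill p F {0} (trP p F (X 3 ^ (p - 2)))) = 2 * 3 ^ (p - 2) := by
  classical
  rw [W_eq, coeff_sum]
  rw [Finset.sum_eq_single_of_mem 0 (Finset.mem_range.mpr (by omega)) ?hout]
  case hout =>
    intro i hi hine
    rw [coeff_sum]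
    apply Finset.sum_eq_zero
    intro j hj
    rw [coeff_monomial, if_neg]
    intro heq
    have h3 := DFunLike.congr_fun heq (3 : Fin 4)
    simp [Finsupp.single_apply] at h3
    exact hine h3
  rw [coeff_sum]
  rw [Finset.sum_eq_single_of_mem (p - 3) (Finset.mem_range.mpr (by omega)) ?hin]
  case hin =>
    intro j hj hjne
    rw [coeff_monomial, if_neg]
    intro heq
    have h2 := DFunLike.congr_fun heq (2 : Fin 4)
    simp [Finsupp.single_apply] at h2
    exact hjne h2
  rw [coeff_monomial, if_pos ?heq]
  case heq =>
    ext a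
    fin_cases a <;> simp [Finsupp.single_apply] <;> omega
  rw [Nat.choose_zero_right, Nat.sub_zero, show p - 3 = (p - 2) - 1 by omega,
    Nat.choose_symm (by omega), Nat.choose_one_right,
    show 2 * (p - 2) - ((p - 2) - 1) = p - 1 by omega, SSum_eq (by omega), if_pos rfl,
    Nat.cast_sub (by omega : 2 ≤ p), CharP.cast_eq_zero F p, Nat.cast_one, Nat.cast_ofNat]
  ring

lemma epoly_homog : (epoly F).IsHomogeneous 3 := by
  have hX : ∀ i : Fin 4, (X i : MvPolynomial (Fin 4) F).IsHomogeneous 1 :=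
    fun i => isHomogeneous_X _ _
  have h1 : ((2 : MvPolynomial (Fin 4) F) * X 1 ^ 3).IsHomogeneous 3 := by
    rw [show (2 : MvPolynomial (Fin 4) F) = C 2 from (map_ofNat C 2).symm]
    exact isHomogeneous_C_mul_X_pow 2 1 3
  have h2 : (X 0 * (X 3 * X 0 - 3 * X 2 * X 1) : MvPolynomial (Fin 4) F).IsHomogeneous 3 := by
    have ha : (X 3 * X 0 : MvPolynomial (Fin 4) F).IsHomogeneous 2 := by
      simpa using (hX 3).mul (hX 0)
    have hb : ((3 : MvPolynomial (Fin 4) F) * X 2 * X 1).IsHomogeneous 2 := by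
      rw [show (3 : MvPolynomial (Fin 4) F) = C 3 from (map_ofNat C 3).symm]
      simpa using (isHomogeneous_C_mul_X (3 : F) 2).mul (hX 1)
    simpa using (hX 0).mul (ha.sub hb)
  rw [epoly]
  exact h1.add h2

lemma trP_homog : (trP p F (X 3 ^ (p - 2))).IsHomogeneous (p - 2) := by
  rw [trP]
  exact MvPolynomial.IsHomogeneous.sum _ _ _
    (fun s _ => act_homog (isHomogeneous_X_pow _ _))

lemma trBG_homog {f : MvPolynomial (Fin 4) F} {n : ℕ} (hf : f.IsHomogeneous n) :
    (trBG p F f).IsHomogeneous n := by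
  rw [trBG]
  exact (MvPolynomial.IsHomogeneous.sum _ _ _ (fun s _ => act_homog hf)).add (act_homog hf)

end AuxLemmas

/-- the lead term of `tr_B^G(N·e)` (grevlex, `a₀ < a₁ < a₂ < a₃`) is
`2 a₃^p a₁³`, and the lead term of `tr_B^G(N·tr^P(a₃^{p-2}))` is `(2/3) a₃^p a₂^{p-3} a₁`. -/
theorem leadterms (p : ℕ) [Fact p.Prime] (hp : 3 < p)
    (F : Type) [Field F] [CharP F p] :
    LeadTermIs (trBG p F (Npoly p F * epoly F)) 2
      (Finsupp.single 3 p + Finsupp.single 1 3) ∧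
    LeadTermIs (trBG p F (Npoly p F * trP p F (X 3 ^ (p - 2)))) (2 / 3 : F)
      (Finsupp.single 3 p + Finsupp.single 2 (p - 3) + Finsupp.single 1 1) := by

  classical
  have hp2 : 2 ≤ p := by omega
  have h2ne : (2 : F) ≠ 0 := by
    intro h
    rw [show (2 : F) = ((2 : ℕ) : F) by norm_num] at h
    have h1 := (CharP.cast_eq_zero_iff F p 2).mp h
    have := Nat.le_of_dvd (by norm_num) h1
    omega
  have h3ne : (3 : F) ≠ 0 := by
    intro h
    rw [show (3 : F) = ((3 : ℕ) : F) by norm_num] at h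
    have h1 := (CharP.cast_eq_zero_iff F p 3).mp h
    have := Nat.le_of_dvd (by norm_num) h1
    omega
  have hMcoeff : coeff (Finsupp.single 3 p) (kill p F {0} (Npoly p F)) = 1 := by
    rw [coeff_kill, if_pos (fun i hi => by rw [Finset.mem_singleton] at hi; subst hi; simp [Finsupp.single_apply]), coeff_X3p_N]
  have hMsupp : ∀ u : Fin 4 →₀ ℕ, coeff u (kill p F {0} (Npoly p F)) ≠ 0 →
      u 0 = 0 ∧ u 0 + u 1 + u 2 + u 3 = p := by
    intro u hu
    have h0 : u 0 = 0 := by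
      by_contra h
      rw [coeff_kill, if_neg (by push_neg; exact ⟨0, Finset.mem_singleton_self 0, h⟩)] at hu
      exact hu rfl
    have hsum := homog_sum4 (kill_homog N_homog) hu
    rw [Fin.sum_univ_four] at hsum
    exact ⟨h0, hsum⟩
  constructor
  · -- Part 1 : tr_B^G (N e)
    set d : Fin 4 →₀ ℕ := Finsupp.single 3 p + Finsupp.single 1 3 with hd
    have hdv0 : d 0 = 0 := by simp [hd, Finsupp.single_apply]
    have hdv1 : d 1 = 3 := by simp [hd, Finsupp.single_apply]
    have hdv2 : d 2 = 0 := by simp [hd, Finsupp.single_apply]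
    have hdv3 : d 3 = p := by simp [hd, Finsupp.single_apply]
    have hpsi : kill p F {0} (trBG p F (Npoly p F * epoly F))
        = kill p F {0} (Npoly p F) * monomial (Finsupp.single 1 3) 2 := by
      rw [psi_trBG, psi_epoly]
    have hcoeffd : coeff d (trBG p F (Npoly p F * epoly F)) = 2 := by
      have h := coeff_kill (p := p) (F := F) {0} (trBG p F (Npoly p F * epoly F)) d
      rw [if_pos (fun i hi => by rw [Finset.mem_singleton] at hi; subst hi; exact hdv0)] at h
      rw [← h, hpsi, hd, coeff_mul_monomial, hMcoeff, one_mul]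
    refine ⟨⟨by rw [hcoeffd]; exact h2ne, ?_⟩, hcoeffd⟩
    intro e he hne
    have hce : coeff e (trBG p F (Npoly p F * epoly F)) ≠ 0 := mem_support_iff.mp he
    have hdeg_e : ∑ i : Fin 4, e i = p + 3 :=
      homog_sum4 (trBG_homog (by simpa using N_homog.mul epoly_homog)) hce
    have hdeg_d : ∑ i : Fin 4, d i = p + 3 := by
      rw [Fin.sum_univ_four, hdv0, hdv1, hdv2, hdv3]
      omega
    have hdeg : ∑ i : Fin 4, e i = ∑ i : Fin 4, d i := hdeg_e.trans hdeg_d.symm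
    have hdeg_e4 : e 0 + e 1 + e 2 + e 3 = p + 3 := by
      rw [← Fin.sum_univ_four e]; exact hdeg_e
    by_cases h0 : e 0 = 0
    · have hce' : coeff e (kill p F {0} (trBG p F (Npoly p F * epoly F))) ≠ 0 := by
        rw [coeff_kill, if_pos (fun i hi => by rw [Finset.mem_singleton] at hi; subst hi; exact h0)]
        exact hce
      rw [hpsi] at hce'
      obtain ⟨u, hu, w, hw, hc⟩ := Finset.mem_add.mp
        (MvPolynomial.support_mul _ _ (mem_support_iff.mpr hce'))
      have hw' : w = Finsupp.single 1 3 := Finset.mem_singleton.mp (support_monomial_subset hw)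
      obtain ⟨hu0, husum⟩ := hMsupp u (mem_support_iff.mp hu)
      have hcomp : ∀ a : Fin 4, e a = u a + w a := by
        intro a; rw [← hc]; rfl
      have hw0 : w 0 = 0 := by rw [hw']; simp [Finsupp.single_apply]
      have hw1 : w 1 = 3 := by rw [hw']; simp [Finsupp.single_apply]
      have hw2 : w 2 = 0 := by rw [hw']; simp [Finsupp.single_apply]
      have hw3 : w 3 = 0 := by rw [hw']; simp [Finsupp.single_apply]
      by_cases hu1 : u 1 = 0
      · by_cases hu2 : u 2 = 0
        · exfalso
          apply hne
          ext a
          fin_cases a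
          · show e 0 = d 0
            rw [hdv0]; exact h0
          · show e 1 = d 1
            rw [hdv1, hcomp 1, hw1, hu1]
          · show e 2 = d 2
            rw [hdv2, hcomp 2, hw2, hu2]
          · show e 3 = d 3
            rw [hdv3, hcomp 3, hw3]
            have h1 := hcomp 0
            have h2 := hcomp 1
            have h3 := hcomp 2
            omega
        · refine Or.inr ⟨hdeg, ⟨2, ?_, ?_⟩⟩
          · rw [hdv2, hcomp 2, hw2]; omega
          · intro j hj
            fin_cases j
            · show e 0 = d 0
              rw [hdv0]; exact h0
            · show e 1 = d 1
              rw [hdv1, hcomp 1, hw1, hu1]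
            · exact absurd hj (by decide)
            · exact absurd hj (by decide)
      · refine Or.inr ⟨hdeg, ⟨1, ?_, ?_⟩⟩
        · rw [hdv1, hcomp 1, hw1]; omega
        · intro j hj
          fin_cases j
          · show e 0 = d 0
            rw [hdv0]; exact h0
          · exact absurd hj (by decide)
          · exact absurd hj (by decide)
          · exact absurd hj (by decide)
    · refine Or.inr ⟨hdeg, ⟨0, ?_, ?_⟩⟩
      · rw [hdv0]; omega
      · intro j hj
        fin_cases j <;> exact absurd hj (by decide)
  · -- Part 2 : tr_B^G (N tr^P(a3^(p-2)))
    set d : Fin 4 →₀ ℕ :=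
      Finsupp.single 3 p + Finsupp.single 2 (p - 3) + Finsupp.single 1 1 with hd
    have hdv0 : d 0 = 0 := by simp [hd, Finsupp.single_apply]
    have hdv1 : d 1 = 1 := by simp [hd, Finsupp.single_apply]
    have hdv2 : d 2 = p - 3 := by simp [hd, Finsupp.single_apply]
    have hdv3 : d 3 = p := by simp [hd, Finsupp.single_apply]
    have hpsi : kill p F {0} (trBG p F (Npoly p F * trP p F (X 3 ^ (p - 2))))
        = kill p F {0} (Npoly p F) * kill p F {0} (trP p F (X 3 ^ (p - 2))) := psi_trBG _
    have h31 : (3 : F) ^ (p - 1) = 1 := by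
      have h3z : (3 : ZMod p) ≠ 0 := by
        intro h
        rw [show (3 : ZMod p) = ((3 : ℕ) : ZMod p) by norm_num] at h
        have h1 := (ZMod.natCast_eq_zero_iff 3 p).mp h
        have := Nat.le_of_dvd (by norm_num) h1
        omega
      have h1 := congrArg (κQ p F) (ZMod.pow_card_sub_one_eq_one h3z)
      rw [map_pow, map_one, map_ofNat] at h1
      exact h1
    have hval : (2 : F) * 3 ^ (p - 2) = 2 / 3 := by
      rw [eq_div_iff h3ne, mul_assoc, ← pow_succ, show p - 2 + 1 = p - 1 by omega, h31,
        mul_one]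
    have hcoeffd : coeff d (trBG p F (Npoly p F * trP p F (X 3 ^ (p - 2)))) = 2 / 3 := by
      have h := coeff_kill (p := p) (F := F) {0}
        (trBG p F (Npoly p F * trP p F (X 3 ^ (p - 2)))) d
      rw [if_pos (fun i hi => by rw [Finset.mem_singleton] at hi; subst hi; exact hdv0)] at h
      rw [← h, hpsi, coeff_mul]
      rw [Finset.sum_eq_single
        ((Finsupp.single 3 p : Fin 4 →₀ ℕ),
          (Finsupp.single 2 (p - 3) + Finsupp.single 1 1 : Fin 4 →₀ ℕ))]
      · rw [hMcoeff, one_mul, W_coeff hp, hval]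
      · intro b hb hbne
        by_contra habs
        have hM1 : coeff b.1 (kill p F {0} (Npoly p F)) ≠ 0 := fun h => habs (by rw [h, zero_mul])
        have hW2 : coeff b.2 (kill p F {0} (trP p F (X 3 ^ (p - 2)))) ≠ 0 :=
          fun h => habs (by rw [h, mul_zero])
        obtain ⟨hb10, hb1sum⟩ := hMsupp b.1 hM1
        obtain ⟨hv0, hv1, hv13, hvsum⟩ := W_supp hp (mem_support_iff.mpr hW2)
        have hsum : b.1 + b.2 = d := Finset.HasAntidiagonal.mem_antidiagonal.mp hb
        have hcompa : ∀ a : Fin 4, b.1 a + b.2 a = d a := by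
          intro a; rw [← hsum]; rfl
        have hc1 := hcompa 1
        have hc2 := hcompa 2
        have hc3 := hcompa 3
        have hc0 := hcompa 0
        rw [hdv1] at hc1
        rw [hdv2] at hc2
        rw [hdv3] at hc3
        rw [hdv0] at hc0
        have h1v : b.2 1 = 1 := by omega
        have h3v : b.2 3 = 0 := hv13 h1v
        apply hbne
        have hb1 : b.1 = Finsupp.single 3 p := by
          ext a
          fin_cases a
          · show b.1 0 = Finsupp.single (3 : Fin 4) p 0
            simp +decide [Finsupp.single_apply]
            try omega
          · show b.1 1 = Finsupp.single (3 : Fin 4) p 1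
            simp +decide [Finsupp.single_apply]
            try omega
          · show b.1 2 = Finsupp.single (3 : Fin 4) p 2
            simp +decide [Finsupp.single_apply]
            try omega
          · show b.1 3 = Finsupp.single (3 : Fin 4) p 3
            simp +decide [Finsupp.single_apply]
            try omega
        have hb2 : b.2 = Finsupp.single 2 (p - 3) + Finsupp.single 1 1 := by
          ext a
          fin_cases a
          · show b.2 0 = ((Finsupp.single (2 : Fin 4) (p - 3) + Finsupp.single 1 1 : Fin 4 →₀ ℕ)) 0
            simp +decide [Finsupp.add_apply, Finsupp.single_apply]
            try omega
          · show b.2 1 = ((Finsupp.single (2 : Fin 4) (p - 3) + Finsupp.single 1 1 : Fin 4 →₀ ℕ)) 1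
            simp +decide [Finsupp.add_apply, Finsupp.single_apply]
            try omega
          · show b.2 2 = ((Finsupp.single (2 : Fin 4) (p - 3) + Finsupp.single 1 1 : Fin 4 →₀ ℕ)) 2
            simp +decide [Finsupp.add_apply, Finsupp.single_apply]
            try omega
          · show b.2 3 = ((Finsupp.single (2 : Fin 4) (p - 3) + Finsupp.single 1 1 : Fin 4 →₀ ℕ)) 3
            simp +decide [Finsupp.add_apply, Finsupp.single_apply]
            try omega
        exact Prod.ext hb1 hb2
      · intro hni
        exfalso
        apply hni
        rw [Finset.HasAntidiagonal.mem_antidiagonal, hd, add_assoc]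
    refine ⟨⟨by rw [hcoeffd]; exact div_ne_zero h2ne h3ne, ?_⟩, hcoeffd⟩
    intro e he hne
    have hce : coeff e (trBG p F (Npoly p F * trP p F (X 3 ^ (p - 2)))) ≠ 0 :=
      mem_support_iff.mp he
    have hdeg_e : ∑ i : Fin 4, e i = p + (p - 2) :=
      homog_sum4 (trBG_homog (N_homog.mul trP_homog)) hce
    have hdeg_d : ∑ i : Fin 4, d i = p + (p - 2) := by
      rw [Fin.sum_univ_four, hdv0, hdv1, hdv2, hdv3]
      omega
    have hdeg : ∑ i : Fin 4, e i = ∑ i : Fin 4, d i := hdeg_e.trans hdeg_d.symm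
    by_cases h0 : e 0 = 0
    · have hce' : coeff e (kill p F {0}
          (trBG p F (Npoly p F * trP p F (X 3 ^ (p - 2))))) ≠ 0 := by
        rw [coeff_kill, if_pos (fun i hi => by rw [Finset.mem_singleton] at hi; subst hi; exact h0)]
        exact hce
      rw [hpsi] at hce'
      obtain ⟨u, hu, v, hv, hc⟩ := Finset.mem_add.mp
        (MvPolynomial.support_mul _ _ (mem_support_iff.mpr hce'))
      obtain ⟨hu0, husum⟩ := hMsupp u (mem_support_iff.mp hu)
      obtain ⟨hv0, hv1, hv13, hvsum⟩ := W_supp hp hv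
      have hcomp : ∀ a : Fin 4, e a = u a + v a := by
        intro a; rw [← hc]; rfl
      have hcomp1 := hcomp 1
      have hcomp2 := hcomp 2
      have hcomp3 := hcomp 3
      by_cases he1 : e 1 = 1
      · have hu1 : u 1 = 0 := by omega
        have hv1' : v 1 = 1 := by omega
        have hv3 : v 3 = 0 := hv13 hv1'
        by_cases hu2 : u 2 = 0
        · exfalso
          apply hne
          ext a
          fin_cases a
          · show e 0 = d 0
            rw [hdv0]; exact h0
          · show e 1 = d 1
            rw [hdv1]; exact he1
          · show e 2 = d 2
            rw [hdv2, hcomp 2]; omega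
          · show e 3 = d 3
            rw [hdv3, hcomp 3]; omega
        · refine Or.inr ⟨hdeg, ⟨2, ?_, ?_⟩⟩
          · rw [hdv2, hcomp 2]; omega
          · intro j hj
            fin_cases j
            · show e 0 = d 0
              rw [hdv0]; exact h0
            · show e 1 = d 1
              rw [hdv1]; exact he1
            · exact absurd hj (by decide)
            · exact absurd hj (by decide)
      · refine Or.inr ⟨hdeg, ⟨1, ?_, ?_⟩⟩
        · rw [hdv1]; omega
        · intro j hj
          fin_cases j
          · show e 0 = d 0
            rw [hdv0]; exact h0
          · exact absurd hj (by decide)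
          · exact absurd hj (by decide)
          · exact absurd hj (by decide)
    · refine Or.inr ⟨hdeg, ⟨0, ?_, ?_⟩⟩
      · rw [hdv0]; omega
      · intro j hj
        fin_cases j <;> exact absurd hj (by decide)


end
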